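/- Fix y ∈ ℝ ⁿ, u ≤ v, an m×n matrix A. Define φ(μ) ∈ ℝⁿ componentwise by φ(μ)ᵢ = clamp((y − Aᵀμ)ᵢ, uᵢ, vᵢ). If μ* ∈ ℝᵐ satisfies A·φ(μ*) = b, then φ(μ*) is the unique minimizer of ½‖x − y‖² over {x : u ≤ x ≤ v, Ax = b}. -/

import Mathlib

theorem box_linear_projection_phi (n m : ℕ)
    (u v y : EuclideanSpace ℝ (Fin n)) (huv : ∀ i, u i ≤ v i)
    (A : Matrix (Fin m) (Fin n) ℝ) (b : Fin m → ℝ)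
    (hne : {x : EuclideanSpace ℝ (Fin n) |
      (∀ i, u i ≤ x i ∧ x i ≤ v i) ∧ A.mulVec x = b}.Nonempty)
    (μ : Fin m → ℝ) (φμ : EuclideanSpace ℝ (Fin n))
    (hφ : ∀ i, φμ i = min (max (y i - A.transpose.mulVec μ i) (u i)) (v i))
    (hfeas : A.mulVec φμ = b) :
    ((∀ i, u i ≤ φμ i ∧ φμ i ≤ v i) ∧ A.mulVec φμ = b) ∧
    ∀ z : EuclideanSpace ℝ (Fin n),
      ((∀ i, u i ≤ z i ∧ z i ≤ v i) ∧ A.mulVec z = b) → z ≠ φμ →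
        (1/2) * ‖φμ - y‖^2 < (1/2) * ‖z - y‖^2 := by
  have hbounds : ∀ i, u i ≤ φμ i ∧ φμ i ≤ v i := by
    intro i
    rw [hφ i]
    exact ⟨le_min (le_max_right _ _) (huv i), min_le_right _ _⟩
  refine ⟨⟨hbounds, hfeas⟩, ?_⟩
  rintro z ⟨hzb, hzA⟩ hzne
  set w : Fin n → ℝ := fun i => y i - A.transpose.mulVec μ i with hw
  have hφ' : ∀ i, φμ i = min (max (w i) (u i)) (v i) := hφ
  have key : ∀ i, 0 ≤ (z i - φμ i) * (φμ i - w i) := by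
    intro i
    have h1 := (hzb i).1
    have h2 := (hzb i).2
    rcases le_total (w i) (u i) with h | h
    · have he : φμ i = u i := by
        rw [hφ' i, max_eq_right h, min_eq_left (huv i)]
      nlinarith
    · rcases le_total (w i) (v i) with h' | h'
      · have he : φμ i = w i := by rw [hφ' i, max_eq_left h, min_eq_left h']
        nlinarith
      · have he : φμ i = v i := by
          rw [hφ' i, min_eq_right (h'.trans (le_max_left _ _))]
        nlinarith
  have hAz : ∀ j, (∑ i, A j i * z i) = (∑ i, A j i * φμ i) := by
    intro j
    have e1 := congrFun hzA j
    have e2 := congrFun hfeas j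
    simp only [Matrix.mulVec, dotProduct] at e1 e2
    rw [e1, e2]
  have hsum1 : ∑ i, (z i - φμ i) * (A.transpose.mulVec μ i) = 0 := by
    have h1 : ∑ i, (z i - φμ i) * (A.transpose.mulVec μ i)
        = ∑ j, (∑ i, A j i * z i - ∑ i, A j i * φμ i) * μ j := by
      simp only [Matrix.mulVec, dotProduct, Matrix.transpose_apply,
        Finset.mul_sum, Finset.sum_mul, ← Finset.sum_sub_distrib]
      rw [Finset.sum_comm]
      exact Finset.sum_congr rfl fun j _ => Finset.sum_congr rfl fun i _ => by ring
    rw [h1]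
    exact Finset.sum_eq_zero fun j _ => by rw [hAz j]; ring
  have hsum2 : 0 ≤ ∑ i, (z i - φμ i) * (φμ i - y i) := by
    have he : ∑ i, (z i - φμ i) * (φμ i - y i)
        = (∑ i, (z i - φμ i) * (φμ i - w i))
          - ∑ i, (z i - φμ i) * (A.transpose.mulVec μ i) := by
      rw [← Finset.sum_sub_distrib]
      exact Finset.sum_congr rfl fun i _ => by simp only [hw]; ring
    rw [he, hsum1, sub_zero]
    exact Finset.sum_nonneg fun i _ => key i
  have hpos : 0 < ∑ i, (z i - φμ i) ^ 2 := by
    have hex : ∃ i, z i ≠ φμ i := by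
      by_contra h
      push_neg at h
      exact hzne (PiLp.ext h)
    obtain ⟨i, hi⟩ := hex
    refine Finset.sum_pos' (fun j _ => sq_nonneg _) ⟨i, Finset.mem_univ i, ?_⟩
    have hne0 : z i - φμ i ≠ 0 := sub_ne_zero.mpr hi
    positivity
  have hn : ∀ x : EuclideanSpace ℝ (Fin n), ‖x - y‖ ^ 2 = ∑ i, (x i - y i) ^ 2 := by
    intro x
    rw [EuclideanSpace.norm_eq, Real.sq_sqrt (by positivity)]
    exact Finset.sum_congr rfl fun i _ => by
      simp [Real.norm_eq_abs, sq_abs]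
  have hexp : ∑ i, (z i - y i) ^ 2
      = (∑ i, (z i - φμ i) ^ 2) + 2 * (∑ i, (z i - φμ i) * (φμ i - y i))
        + ∑ i, (φμ i - y i) ^ 2 := by
    rw [Finset.mul_sum, ← Finset.sum_add_distrib, ← Finset.sum_add_distrib]
    exact Finset.sum_congr rfl fun i _ => by ring
  rw [hn φμ, hn z]
  linarith
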